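/- arXiv:1202.2715 — 2 statements merged into one kernel-verified Lean document; each statement's English description precedes it below -/
import Mathlib

section
/- The vertex operators Γ_+ (the homomorphism p_k ↦ p_k + f_k) and Γ_- (multiplication by Ω(p_1 f)) satisfy: Γ_±(f) and Γ_±(g) commute, and Γ_+(f)·Γ_-(g) = Ω(fg)·Γ_-(g)·Γ_+(f), where Ω(fg) is a scalar (formal series in the auxiliary variables). -/
open MvPolynomial

/-- Λ = ℂ[p_1,p_2,...]; variable `X k` is the power sum p_{k+1}. -/
abbrev SymFun : Type := MvPolynomial ℕ ℂ

/-- The vertex operator Γ_+(f): the ring homomorphism p_k ↦ p_k + f_k.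
Here `F k` is the plethystic value f_{k+1}. -/
noncomputable def GammaPlus (F : ℕ → ℂ) : SymFun →ₐ[ℂ] SymFun :=
  aeval fun k => X k + C (F k)

/-- The element Ω(p_1 g) = exp(∑_{k≥1} (g_k/k) p_k) of the completion Λ̂,
as a formal power series in the p-variables: its coefficient on the
monomial p^d is ∏_k (g_k/k)^{d_k} / d_k!.  `G k` encodes g_{k+1}. -/
noncomputable def OmegaElt (G : ℕ → ℂ) : MvPowerSeries ℕ ℂ :=
  fun d => d.prod fun k e => (G k / (k + 1)) ^ e / (e.factorial : ℂ)

/-- The extension of Γ_+(f) to power series, defined coefficientwise: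
the coefficient of p^d in Γ_+(f)(S) is
∑_e S_{d+e} ∏_k C(d_k+e_k, e_k) f_k^{e_k} (a convergent sum when it exists). -/
noncomputable def GammaPlusExt (F : ℕ → ℂ) (S : MvPowerSeries ℕ ℂ) :
    MvPowerSeries ℕ ℂ :=
  fun d => ∑' e : ℕ →₀ ℕ,
    S (d + e) * ((d + e).prod fun k m => (m.choose (e k) : ℂ) * F k ^ e k)

section AuxAnalysis

open Finset Filter Topology

private lemma hasSum_mul_aux {𝕜 : Type} [RCLike 𝕜] {κ : Type} (f : ℕ → 𝕜) (W : κ → 𝕜)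
    {tf : 𝕜} {w : 𝕜} (hf : HasSum f tf) (ih : HasSum W w) :
    HasSum (fun p : ℕ × κ => f p.1 * W p.2) (tf * w) := by
  refine HasSum.mul hf ih ?_
  exact Summable.of_norm (Summable.mul_norm hf.summable.norm ih.summable.norm)

private lemma hasSum_finsupp_prod_subtype {𝕜 : Type} [RCLike 𝕜] (f : ℕ → ℕ → 𝕜)
    (hf0 : ∀ k, f k 0 = 1) (hf : ∀ k, Summable (f k)) (s : Finset ℕ) :
    HasSum (fun e : {e : ℕ →₀ ℕ // e.support ⊆ s} =>
        (e : ℕ →₀ ℕ).prod fun k n => f k n)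
      (∏ k ∈ s, ∑' n, f k n) := by
  classical
  induction s using Finset.cons_induction with
  | empty =>
    rw [Finset.prod_empty]
    have h0 : ∀ b' : {e : ℕ →₀ ℕ // e.support ⊆ (∅ : Finset ℕ)},
        b' = ⟨0, by simp⟩ := by
      rintro ⟨e, he⟩
      ext1
      rwa [Finset.subset_empty, Finsupp.support_eq_empty] at he
    have := hasSum_single (f := fun e : {e : ℕ →₀ ℕ // e.support ⊆ (∅ : Finset ℕ)} =>
      (e : ℕ →₀ ℕ).prod fun k n => f k n) ⟨0, by simp⟩
      (fun b' hb' => absurd (h0 b') hb')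
    simpa [Finsupp.prod_zero_index] using this
  | cons a s ha ih =>
    let Φ : ℕ × {e : ℕ →₀ ℕ // e.support ⊆ s} ≃ {e : ℕ →₀ ℕ // e.support ⊆ cons a s ha} :=
      { toFun := fun p => ⟨Finsupp.single a p.1 + (p.2 : ℕ →₀ ℕ), by
          refine (Finsupp.support_add).trans ?_
          apply Finset.union_subset
          · exact (Finsupp.support_single_subset).trans (by simp)
          · exact p.2.2.trans (Finset.subset_cons _)⟩
        invFun := fun E => ((E : ℕ →₀ ℕ) a, ⟨(E : ℕ →₀ ℕ).erase a, by
          intro x hx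
          rw [Finsupp.support_erase, Finset.mem_erase] at hx
          have := E.2 hx.2
          rw [Finset.mem_cons] at this
          exact this.resolve_left hx.1⟩)
        left_inv := fun p => by
          have hpa : (p.2 : ℕ →₀ ℕ) a = 0 := by
            by_contra h
            exact ha (p.2.2 (Finsupp.mem_support_iff.2 h))
          refine Prod.ext ?_ ?_
          · simp [hpa]
          · ext1
            ext x
            rcases eq_or_ne x a with rfl | hx
            · simp [Finsupp.erase_same, hpa.symm]
            · simp [Finsupp.erase_ne hx, Finsupp.single_eq_of_ne (fun h => hx h.symm)]
        right_inv := fun E => by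
          ext1
          exact Finsupp.single_add_erase a _ }
    have key := hasSum_mul_aux (f a)
      (fun e : {e : ℕ →₀ ℕ // e.support ⊆ s} => (e : ℕ →₀ ℕ).prod fun k n => f k n)
      (hf a).hasSum ih
    rw [Finset.prod_cons]
    refine (Equiv.hasSum_iff Φ).1 ?_
    have hfun : ((fun e : {e : ℕ →₀ ℕ // e.support ⊆ cons a s ha} =>
        (e : ℕ →₀ ℕ).prod fun k n => f k n) ∘ Φ) =
        fun p : ℕ × {e : ℕ →₀ ℕ // e.support ⊆ s} =>
          f a p.1 * ((p.2 : ℕ →₀ ℕ).prod fun k n => f k n) := by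
      funext p
      have hdisj : Disjoint (Finsupp.single a p.1).support (p.2 : ℕ →₀ ℕ).support := by
        refine Finset.disjoint_left.2 fun x hx hx' => ?_
        have hxa : x = a := by
          have := Finsupp.support_single_subset hx
          simpa using this
        exact ha (p.2.2 (hxa ▸ hx'))
      show (Finsupp.single a p.1 + (p.2 : ℕ →₀ ℕ)).prod (fun k n => f k n) = _
      rw [Finsupp.prod_add_index_of_disjoint hdisj, Finsupp.prod_single_index (hf0 a)]
    rw [hfun]
    exact key

private lemma hasSum_exp_finsupp (a : ℕ → ℂ) (ha : Summable a) :
    HasSum (fun e : ℕ →₀ ℕ => e.prod fun k n => a k ^ n / (n.factorial : ℂ))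
      (Complex.exp (∑' k, a k)) := by
  classical
  set W : (ℕ →₀ ℕ) → ℂ := fun e => e.prod fun k n => a k ^ n / (n.factorial : ℂ) with hWdef
  set Wb : (ℕ →₀ ℕ) → ℝ := fun e => e.prod fun k n => ‖a k‖ ^ n / (n.factorial : ℝ) with hWbdef
  have hnorm : ∀ e, ‖W e‖ = Wb e := by
    intro e
    rw [hWdef, hWbdef]
    simp only [Finsupp.prod]
    rw [norm_prod]
    refine Finset.prod_congr rfl fun k _ => ?_
    rw [norm_div, norm_pow]
    simp
  have han : Summable fun k => ‖a k‖ := ha.norm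
  have fC : ∀ k, HasSum (fun n => a k ^ n / (n.factorial : ℂ)) (Complex.exp (a k)) := by
    intro k
    have := NormedSpace.expSeries_div_hasSum_exp (a k)
    rwa [← Complex.exp_eq_exp_ℂ] at this
  have fR : ∀ k, HasSum (fun n => ‖a k‖ ^ n / (n.factorial : ℝ)) (Real.exp ‖a k‖) := by
    intro k
    have := NormedSpace.expSeries_div_hasSum_exp ‖a k‖
    rwa [← Real.exp_eq_exp_ℝ] at this
  have HC : ∀ s : Finset ℕ, HasSum (fun e : {e : ℕ →₀ ℕ // e.support ⊆ s} => W e.1)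
      (∏ k ∈ s, Complex.exp (a k)) := by
    intro s
    have := hasSum_finsupp_prod_subtype (fun k n => a k ^ n / (n.factorial : ℂ))
      (fun k => by simp) (fun k => (fC k).summable) s
    rwa [Finset.prod_congr rfl fun k _ => (fC k).tsum_eq] at this
  have HR : ∀ s : Finset ℕ, HasSum (fun e : {e : ℕ →₀ ℕ // e.support ⊆ s} => Wb e.1)
      (∏ k ∈ s, Real.exp ‖a k‖) := by
    intro s
    have := hasSum_finsupp_prod_subtype (fun k n => (‖a k‖ : ℝ) ^ n / (n.factorial : ℝ))
      (fun k => by simp) (fun k => (fR k).summable) s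
    rwa [Finset.prod_congr rfl fun k _ => (fR k).tsum_eq] at this
  set B : ℝ := Real.exp (∑' k, ‖a k‖) with hBdef
  have hprodB : ∀ s : Finset ℕ, ∏ k ∈ s, Real.exp ‖a k‖ ≤ B := by
    intro s
    rw [← Real.exp_sum, hBdef, Real.exp_le_exp]
    exact han.sum_le_tsum s (fun k _ => norm_nonneg _)
  have hWb_nonneg : ∀ e, 0 ≤ Wb e := by
    intro e
    refine Finset.prod_nonneg fun k _ => ?_
    positivity
  have hsumE : ∀ E : Finset (ℕ →₀ ℕ), ∑ e ∈ E, Wb e ≤ B := by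
    intro E
    set s : Finset ℕ := E.sup Finsupp.support with hsdef
    have hes : ∀ e ∈ E, e.support ⊆ s := fun e he => Finset.le_sup he
    have hinj : Function.Injective
        (fun x : {x // x ∈ E} => (⟨x.1, hes x.1 x.2⟩ : {e : ℕ →₀ ℕ // e.support ⊆ s})) := by
      rintro ⟨x, hx⟩ ⟨y, hy⟩ h
      simpa [Subtype.ext_iff] using h
    have : ∑ e ∈ E, Wb e
        = ∑ x ∈ E.attach.map ⟨_, hinj⟩, Wb x.1 := by
      rw [Finset.sum_map]
      simp [Finset.sum_attach E (fun e => Wb e)]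
    rw [this]
    calc ∑ x ∈ E.attach.map ⟨_, hinj⟩, Wb x.1
        ≤ ∑' x : {e : ℕ →₀ ℕ // e.support ⊆ s}, Wb x.1 :=
          (HR s).summable.sum_le_tsum _ (fun i _ => hWb_nonneg _)
      _ = ∏ k ∈ s, Real.exp ‖a k‖ := (HR s).tsum_eq
      _ ≤ B := hprodB s
  have hWb : Summable Wb := summable_of_sum_le hWb_nonneg hsumE
  have hW : Summable W := by
    refine Summable.of_norm ?_
    rw [show (fun e => ‖W e‖) = Wb from funext hnorm]
    exact hWb
  have hsuble : ∀ s : Finset ℕ, ∏ k ∈ s, Real.exp ‖a k‖ ≤ ∑' e, Wb e := by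
    intro s
    rw [← (HR s).tsum_eq]
    exact Summable.tsum_le_tsum_of_inj Subtype.val Subtype.val_injective
      (fun c _ => hWb_nonneg c) (fun i => le_rfl) (HR s).summable hWb
  have hWbval : ∑' e, Wb e = B := by
    refine le_antisymm (hWb.tsum_le_of_sum_le hsumE) ?_
    have hP : Tendsto (fun s : Finset ℕ => ∏ k ∈ s, Real.exp ‖a k‖) atTop (𝓝 B) :=
      han.hasSum.rexp
    exact le_of_tendsto hP (Filter.Eventually.of_forall hsuble)
  have hT2 : Tendsto (fun s : Finset ℕ => ∑' e : {e : ℕ →₀ ℕ // e.support ⊆ s}, W e.1)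
      atTop (𝓝 (∑' e, W e)) := by
    rw [tendsto_iff_norm_sub_tendsto_zero]
    refine squeeze_zero (fun s => norm_nonneg _)
      (g := fun s : Finset ℕ => ∑' e, Wb e - ∑' e : {e : ℕ →₀ ℕ // e.support ⊆ s}, Wb e.1) ?_ ?_
    · intro s
      have hsplitW := Summable.tsum_add_tsum_compl (f := W) (s := {e : ℕ →₀ ℕ | e.support ⊆ s})
        (hW.subtype _) (hW.subtype _)
      have hsplitWb := Summable.tsum_add_tsum_compl (f := Wb) (s := {e : ℕ →₀ ℕ | e.support ⊆ s})
        (hWb.subtype _) (hWb.subtype _)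
      have hsplitW' : (∑' e : {e : ℕ →₀ ℕ // e.support ⊆ s}, W e.1)
          + (∑' e : ↑{e : ℕ →₀ ℕ | e.support ⊆ s}ᶜ, W e.1) = ∑' e, W e := hsplitW
      have h1 : (∑' e : {e : ℕ →₀ ℕ // e.support ⊆ s}, W e.1) - ∑' e, W e
          = -(∑' e : ↑{e : ℕ →₀ ℕ | e.support ⊆ s}ᶜ, W e.1) := by
        linear_combination hsplitW'
      rw [h1, norm_neg]
      have hsplitWb' : (∑' e : {e : ℕ →₀ ℕ // e.support ⊆ s}, Wb e.1)
          + (∑' e : ↑{e : ℕ →₀ ℕ | e.support ⊆ s}ᶜ, Wb e.1) = ∑' e, Wb e := hsplitWb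
      have h2 : ∑' e, Wb e - (∑' e : {e : ℕ →₀ ℕ // e.support ⊆ s}, Wb e.1)
          = ∑' e : ↑{e : ℕ →₀ ℕ | e.support ⊆ s}ᶜ, Wb e.1 := by
        linear_combination -hsplitWb'
      have hb : ‖∑' e : ↑{e : ℕ →₀ ℕ | e.support ⊆ s}ᶜ, W e.1‖
          ≤ ∑' e : ↑{e : ℕ →₀ ℕ | e.support ⊆ s}ᶜ, Wb e.1 := by
        refine (norm_tsum_le_tsum_norm ?_).trans (le_of_eq (tsum_congr fun e => hnorm e.1))
        exact (hWb.subtype _).congr fun e => (hnorm e.1).symm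
      exact hb.trans_eq h2.symm
    · have : Tendsto (fun s : Finset ℕ => ∑' e : {e : ℕ →₀ ℕ // e.support ⊆ s}, Wb e.1)
          atTop (𝓝 (∑' e, Wb e)) := by
        rw [hWbval]
        have : (fun s : Finset ℕ => ∑' e : {e : ℕ →₀ ℕ // e.support ⊆ s}, Wb e.1)
            = fun s : Finset ℕ => ∏ k ∈ s, Real.exp ‖a k‖ := funext fun s => (HR s).tsum_eq
        rw [this]
        exact han.hasSum.rexp
      have h0 := (tendsto_const_nhds (x := ∑' e, Wb e)
        (f := atTop (α := Finset ℕ))).sub this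
      simpa using h0
  have hT1 : Tendsto (fun s : Finset ℕ => ∑' e : {e : ℕ →₀ ℕ // e.support ⊆ s}, W e.1)
      atTop (𝓝 (Complex.exp (∑' k, a k))) := by
    have : (fun s : Finset ℕ => ∑' e : {e : ℕ →₀ ℕ // e.support ⊆ s}, W e.1)
        = fun s : Finset ℕ => ∏ k ∈ s, Complex.exp (a k) := funext fun s => (HC s).tsum_eq
    rw [this]
    exact ha.hasSum.cexp
  have : ∑' e, W e = Complex.exp (∑' k, a k) := tendsto_nhds_unique hT2 hT1
  exact this ▸ hW.hasSum

end AuxAnalysis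

section AuxCoeff

private lemma apply_eq_coeff (φ : MvPowerSeries ℕ ℂ) (n : ℕ →₀ ℕ) :
    φ n = MvPowerSeries.coeff n φ := rfl

private lemma basePointwise (F G : ℕ → ℂ) (d e : ℕ →₀ ℕ) :
    OmegaElt G (d + e) * ((d + e).prod fun k m => (m.choose (e k) : ℂ) * F k ^ e k)
      = OmegaElt G d * (e.prod fun k n => (F k * G k / (k + 1)) ^ n / (n.factorial : ℂ)) := by
  classical
  set U : Finset ℕ := (d + e).support with hU
  have hde : ∀ j, (d + e) j = d j + e j := fun j => Finsupp.add_apply d e j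
  have hdU : d.support ⊆ U := Finsupp.support_monotone le_self_add
  have heU : e.support ⊆ U := Finsupp.support_monotone le_add_self
  have h1 : OmegaElt G (d + e)
      = ∏ k ∈ U, (G k / (k + 1)) ^ ((d + e) k) / (((d + e) k).factorial : ℂ) := by
    rw [OmegaElt, Finsupp.prod]
  have h2 : ((d + e).prod fun k m => (m.choose (e k) : ℂ) * F k ^ e k)
      = ∏ k ∈ U, (((d + e) k).choose (e k) : ℂ) * F k ^ e k := by
    rw [Finsupp.prod]
  have h3 : OmegaElt G d = ∏ k ∈ U, (G k / (k + 1)) ^ (d k) / ((d k).factorial : ℂ) := by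
    rw [OmegaElt, Finsupp.prod]
    refine Finset.prod_subset hdU fun j _ hj => ?_
    rw [Finsupp.notMem_support_iff.1 hj]
    simp
  have h4 : (e.prod fun k n => (F k * G k / (k + 1)) ^ n / (n.factorial : ℂ))
      = ∏ k ∈ U, (F k * G k / (k + 1)) ^ (e k) / ((e k).factorial : ℂ) := by
    rw [Finsupp.prod]
    refine Finset.prod_subset heU fun j _ hj => ?_
    rw [Finsupp.notMem_support_iff.1 hj]
    simp
  rw [h1, h2, h3, h4, ← Finset.prod_mul_distrib, ← Finset.prod_mul_distrib]
  refine Finset.prod_congr rfl fun k _ => ?_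
  rw [hde]
  have hfact : ((d k + e k).factorial : ℂ)
      = ((d k + e k).choose (e k) : ℂ) * ((e k).factorial : ℂ) * ((d k).factorial : ℂ) := by
    have := Nat.choose_mul_factorial_mul_factorial (Nat.le_add_left (e k) (d k))
    have h' : (d k + e k) - e k = d k := by omega
    rw [h'] at this
    exact_mod_cast this.symm
  have hne : ((d k + e k).choose (e k) : ℂ) ≠ 0 := by
    exact_mod_cast Nat.cast_ne_zero.2 (Nat.choose_pos (Nat.le_add_left (e k) (d k))).ne'
  have hf1 : ((d k).factorial : ℂ) ≠ 0 := Nat.cast_ne_zero.2 (Nat.factorial_ne_zero _)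
  have hf2 : ((e k).factorial : ℂ) ≠ 0 := Nat.cast_ne_zero.2 (Nat.factorial_ne_zero _)
  rw [mul_div_assoc (F k) (G k), mul_pow, pow_add]
  rw [hfact]
  field_simp

private lemma baseHasSum (F G : ℕ → ℂ)
    (hΩ : Summable fun k : ℕ => F k * G k / (k + 1)) (d : ℕ →₀ ℕ) :
    HasSum (fun e : ℕ →₀ ℕ =>
        OmegaElt G (d + e) * ((d + e).prod fun k m => (m.choose (e k) : ℂ) * F k ^ e k))
      (Complex.exp (∑' k : ℕ, F k * G k / (k + 1)) * OmegaElt G d) := by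
  have h := (hasSum_exp_finsupp _ hΩ).mul_left (OmegaElt G d)
  rw [show (fun e : ℕ →₀ ℕ =>
      OmegaElt G (d + e) * ((d + e).prod fun k m => (m.choose (e k) : ℂ) * F k ^ e k))
    = fun e : ℕ →₀ ℕ => OmegaElt G d *
        (e.prod fun k n => (F k * G k / (k + 1)) ^ n / (n.factorial : ℂ))
    from funext (basePointwise F G d), mul_comm (Complex.exp _) (OmegaElt G d)]
  exact h

private lemma prodExt (F : ℕ → ℂ) (d e : ℕ →₀ ℕ) (U : Finset ℕ) (h : (d + e).support ⊆ U) :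
    ((d + e).prod fun k m => (m.choose (e k) : ℂ) * F k ^ e k)
      = ∏ j ∈ U, (((d + e) j).choose (e j) : ℂ) * F j ^ e j := by
  rw [Finsupp.prod]
  refine Finset.prod_subset h fun j _ hj => ?_
  have h0 : (d + e) j = 0 := Finsupp.notMem_support_iff.1 hj
  have he0 : e j = 0 := by
    have := Finsupp.add_apply d e j
    omega
  rw [h0, he0]
  simp

private lemma prodSplitU (F : ℕ → ℂ) (d e : ℕ →₀ ℕ) (k₀ : ℕ) (U : Finset ℕ)
    (h : (d + e).support ⊆ U) (hk₀ : k₀ ∈ U) :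
    ((d + e).prod fun k m => (m.choose (e k) : ℂ) * F k ^ e k)
      = ((((d + e) k₀).choose (e k₀) : ℂ) * F k₀ ^ e k₀) *
        ∏ j ∈ U.erase k₀, (((d + e) j).choose (e j) : ℂ) * F j ^ e j := by
  rw [prodExt F d e U h, ← Finset.mul_prod_erase U _ hk₀]

private lemma stepPointwise (F : ℕ → ℂ) (φ : (ℕ →₀ ℕ) → ℂ) (k₀ : ℕ) (d e : ℕ →₀ ℕ) :
    (if Finsupp.single k₀ 1 ≤ d + e then φ (d + e - Finsupp.single k₀ 1) else 0)
        * ((d + e).prod fun k m => (m.choose (e k) : ℂ) * F k ^ e k)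
    = (if d k₀ = 0 then 0 else
        φ ((d - Finsupp.single k₀ 1) + e) *
          (((d - Finsupp.single k₀ 1) + e).prod fun k m => (m.choose (e k) : ℂ) * F k ^ e k))
      + (if e k₀ = 0 then 0 else
        F k₀ * (φ (d + (e - Finsupp.single k₀ 1)) *
          ((d + (e - Finsupp.single k₀ 1)).prod fun k m =>
            (m.choose ((e - Finsupp.single k₀ 1 : ℕ →₀ ℕ) k) : ℂ) *
              F k ^ (e - Finsupp.single k₀ 1 : ℕ →₀ ℕ) k))) := by
  classical
  set δ : ℕ →₀ ℕ := Finsupp.single k₀ 1 with hδ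
  have hδap : ∀ j, δ j = if k₀ = j then 1 else 0 := fun j => Finsupp.single_apply
  by_cases hd : d k₀ = 0 <;> by_cases he : e k₀ = 0
  · rw [if_neg, if_pos hd, if_pos he]
    · ring
    · rw [hδ, Finsupp.single_le_iff, Finsupp.add_apply]
      omega
  all_goals (
    have hle : δ ≤ d + e := by
      rw [hδ, Finsupp.single_le_iff, Finsupp.add_apply]
      omega
    set U : Finset ℕ := (d + e).support with hU
    have hk₀U : k₀ ∈ U := by
      rw [hU, Finsupp.mem_support_iff, Finsupp.add_apply]
      omega
    have hAsupp : ((d - δ) + e).support ⊆ U := by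
      rw [hU]
      exact Finsupp.support_monotone (add_le_add_left tsub_le_self e)
    have hBsupp : (d + (e - δ)).support ⊆ U := by
      rw [hU]
      exact Finsupp.support_monotone (add_le_add_right tsub_le_self d)
    have hErA : ∏ j ∈ U.erase k₀, ((((d - δ) + e) j).choose (e j) : ℂ) * F j ^ e j
        = ∏ j ∈ U.erase k₀, (((d + e) j).choose (e j) : ℂ) * F j ^ e j := by
      refine Finset.prod_congr rfl fun j hj => ?_
      have hjk : ¬ (k₀ = j) := fun h => (Finset.mem_erase.1 hj).1 h.symm
      simp only [Finsupp.add_apply, Finsupp.tsub_apply, hδap j, if_neg hjk]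
      norm_num
    have hErB : ∏ j ∈ U.erase k₀, (((d + (e - δ)) j).choose ((e - δ) j) : ℂ) * F j ^ (e - δ) j
        = ∏ j ∈ U.erase k₀, (((d + e) j).choose (e j) : ℂ) * F j ^ e j := by
      refine Finset.prod_congr rfl fun j hj => ?_
      have hjk : ¬ (k₀ = j) := fun h => (Finset.mem_erase.1 hj).1 h.symm
      simp only [Finsupp.add_apply, Finsupp.tsub_apply, hδap j, if_neg hjk]
      norm_num
    have hvK : (d + e) k₀ = d k₀ + e k₀ := Finsupp.add_apply d e k₀
    have hvA : ((d - δ) + e) k₀ = (d k₀ - 1) + e k₀ := by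
      simp only [Finsupp.add_apply, Finsupp.tsub_apply, hδap k₀, eq_self_iff_true, if_true]
    have hvB : (d + (e - δ)) k₀ = d k₀ + (e k₀ - 1) := by
      simp only [Finsupp.add_apply, Finsupp.tsub_apply, hδap k₀, eq_self_iff_true, if_true]
    have hvBe : (e - δ) k₀ = e k₀ - 1 := by
      simp only [Finsupp.tsub_apply, hδap k₀, eq_self_iff_true, if_true]
    rw [if_pos hle, prodSplitU F d e k₀ U subset_rfl hk₀U])
  · -- d k₀ = 0, e k₀ ≠ 0
    rw [if_pos hd, if_neg he, prodSplitU F d (e - δ) k₀ U hBsupp hk₀U, hErB]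
    have hsub2 : d + (e - δ) = d + e - δ := by
      ext j
      simp only [Finsupp.add_apply, Finsupp.tsub_apply, hδap j]
      split
      · next h => subst h; omega
      · omega
    rw [hvB, hvBe, hvK, hsub2, hd]
    obtain ⟨n', hn⟩ := Nat.exists_eq_succ_of_ne_zero he
    rw [hn]
    simp only [Nat.succ_sub_one, Nat.zero_add, zero_add, Nat.choose_self, pow_succ]
    push_cast
    ring
  · -- d k₀ ≠ 0, e k₀ = 0
    rw [if_neg hd, if_pos he, prodSplitU F (d - δ) e k₀ U hAsupp hk₀U, hErA]
    have hsub1 : (d - δ) + e = d + e - δ := by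
      ext j
      simp only [Finsupp.add_apply, Finsupp.tsub_apply, hδap j]
      split
      · next h => subst h; omega
      · omega
    rw [hvA, hvK, hsub1, he]
    simp only [Nat.add_zero, add_zero, Nat.choose_zero_right, pow_zero]
  · -- both nonzero
    rw [if_neg hd, if_neg he, prodSplitU F (d - δ) e k₀ U hAsupp hk₀U, hErA,
      prodSplitU F d (e - δ) k₀ U hBsupp hk₀U, hErB]
    have hsub1 : (d - δ) + e = d + e - δ := by
      ext j
      simp only [Finsupp.add_apply, Finsupp.tsub_apply, hδap j]
      split
      · next h => subst h; omega
      · omega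
    have hsub2 : d + (e - δ) = d + e - δ := by
      ext j
      simp only [Finsupp.add_apply, Finsupp.tsub_apply, hδap j]
      split
      · next h => subst h; omega
      · omega
    rw [hvA, hvB, hvBe, hvK, hsub1, hsub2]
    obtain ⟨D', hD⟩ := Nat.exists_eq_succ_of_ne_zero hd
    obtain ⟨n', hn⟩ := Nat.exists_eq_succ_of_ne_zero he
    rw [hD, hn]
    simp only [Nat.succ_sub_one, Nat.add_succ, Nat.succ_add, Nat.choose_succ_succ]
    push_cast
    simp only [pow_succ]
    ring

end AuxCoeff

private lemma mainInduction (F G : ℕ → ℂ)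
    (hΩ : Summable fun k : ℕ => F k * G k / (k + 1))
    (hsum : ∀ (u : SymFun) (d : ℕ →₀ ℕ),
      Summable fun e : ℕ →₀ ℕ =>
        (OmegaElt G * (u : MvPowerSeries ℕ ℂ)) (d + e) *
          ((d + e).prod fun k m => (m.choose (e k) : ℂ) * F k ^ e k))
    (u : SymFun) :
    ∀ d : ℕ →₀ ℕ, GammaPlusExt F (OmegaElt G * (u : MvPowerSeries ℕ ℂ)) d
      = Complex.exp (∑' k : ℕ, F k * G k / (k + 1)) *
          (OmegaElt G * ((GammaPlus F u : SymFun) : MvPowerSeries ℕ ℂ)) d := by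
  classical
  induction u using MvPolynomial.induction_on with
  | C c =>
    intro d
    have hC : ∀ n : ℕ →₀ ℕ,
        (OmegaElt G * ((C c : SymFun) : MvPowerSeries ℕ ℂ)) n = OmegaElt G n * c := by
      intro n
      show MvPowerSeries.coeff n (OmegaElt G * ((C c : SymFun) : MvPowerSeries ℕ ℂ))
        = MvPowerSeries.coeff n (OmegaElt G) * c
      rw [MvPolynomial.coe_C, MvPowerSeries.coeff_mul_C]
    have hΓ : GammaPlus F (C c) = C c := by
      rw [GammaPlus, aeval_C, MvPolynomial.algebraMap_eq]
    rw [hΓ]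
    calc GammaPlusExt F (OmegaElt G * ((C c : SymFun) : MvPowerSeries ℕ ℂ)) d
        = ∑' e : ℕ →₀ ℕ, (OmegaElt G * ((C c : SymFun) : MvPowerSeries ℕ ℂ)) (d + e) *
            ((d + e).prod fun k m => (m.choose (e k) : ℂ) * F k ^ e k) := rfl
      _ = ∑' e : ℕ →₀ ℕ, (OmegaElt G (d + e) *
            ((d + e).prod fun k m => (m.choose (e k) : ℂ) * F k ^ e k)) * c :=
          tsum_congr (fun e => by rw [hC (d + e)]; ring)
      _ = (∑' e : ℕ →₀ ℕ, OmegaElt G (d + e) *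
            ((d + e).prod fun k m => (m.choose (e k) : ℂ) * F k ^ e k)) * c :=
          tsum_mul_right
      _ = (Complex.exp (∑' k : ℕ, F k * G k / (k + 1)) * OmegaElt G d) * c := by
          rw [(baseHasSum F G hΩ d).tsum_eq]
      _ = Complex.exp (∑' k : ℕ, F k * G k / (k + 1)) *
            (OmegaElt G * ((C c : SymFun) : MvPowerSeries ℕ ℂ)) d := by
          rw [hC d]; ring
  | add p q hp hq =>
    intro d
    have hadd : ∀ n : ℕ →₀ ℕ,
        (OmegaElt G * ((p + q : SymFun) : MvPowerSeries ℕ ℂ)) n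
          = (OmegaElt G * (p : MvPowerSeries ℕ ℂ)) n
            + (OmegaElt G * (q : MvPowerSeries ℕ ℂ)) n := by
      intro n
      show MvPowerSeries.coeff n (OmegaElt G * ((p + q : SymFun) : MvPowerSeries ℕ ℂ))
        = MvPowerSeries.coeff n (OmegaElt G * (p : MvPowerSeries ℕ ℂ))
          + MvPowerSeries.coeff n (OmegaElt G * (q : MvPowerSeries ℕ ℂ))
      rw [MvPolynomial.coe_add, mul_add, map_add]
    have hΓadd : ∀ n : ℕ →₀ ℕ,
        (OmegaElt G * ((GammaPlus F (p + q) : SymFun) : MvPowerSeries ℕ ℂ)) n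
          = (OmegaElt G * ((GammaPlus F p : SymFun) : MvPowerSeries ℕ ℂ)) n
            + (OmegaElt G * ((GammaPlus F q : SymFun) : MvPowerSeries ℕ ℂ)) n := by
      intro n
      show MvPowerSeries.coeff n
          (OmegaElt G * ((GammaPlus F (p + q) : SymFun) : MvPowerSeries ℕ ℂ))
        = MvPowerSeries.coeff n
            (OmegaElt G * ((GammaPlus F p : SymFun) : MvPowerSeries ℕ ℂ))
          + MvPowerSeries.coeff n
              (OmegaElt G * ((GammaPlus F q : SymFun) : MvPowerSeries ℕ ℂ))
      rw [map_add, MvPolynomial.coe_add, mul_add, map_add]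
    show (∑' e : ℕ →₀ ℕ, (OmegaElt G * ((p + q : SymFun) : MvPowerSeries ℕ ℂ)) (d + e) *
        ((d + e).prod fun k m => (m.choose (e k) : ℂ) * F k ^ e k)) = _
    rw [tsum_congr (fun e => by rw [hadd (d + e), add_mul])]
    rw [Summable.tsum_add (hsum p d) (hsum q d)]
    rw [hΓadd d]
    have h1 := hp d
    have h2 := hq d
    rw [show GammaPlusExt F (OmegaElt G * (p : MvPowerSeries ℕ ℂ)) d
      = ∑' e : ℕ →₀ ℕ, (OmegaElt G * (p : MvPowerSeries ℕ ℂ)) (d + e) *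
        ((d + e).prod fun k m => (m.choose (e k) : ℂ) * F k ^ e k) from rfl] at h1
    rw [show GammaPlusExt F (OmegaElt G * (q : MvPowerSeries ℕ ℂ)) d
      = ∑' e : ℕ →₀ ℕ, (OmegaElt G * (q : MvPowerSeries ℕ ℂ)) (d + e) *
        ((d + e).prod fun k m => (m.choose (e k) : ℂ) * F k ^ e k) from rfl] at h2
    rw [h1, h2]
    ring
  | mul_X p k₀ hp =>
    intro d
    set δ : ℕ →₀ ℕ := Finsupp.single k₀ 1 with hδ
    set E : ℂ := Complex.exp (∑' k : ℕ, F k * G k / (k + 1)) with hE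
    have hXcoeff : ∀ n : ℕ →₀ ℕ,
        (OmegaElt G * ((p * X k₀ : SymFun) : MvPowerSeries ℕ ℂ)) n
          = if δ ≤ n then (OmegaElt G * (p : MvPowerSeries ℕ ℂ)) (n - δ) else 0 := by
      intro n
      show MvPowerSeries.coeff n
          (OmegaElt G * ((p * X k₀ : SymFun) : MvPowerSeries ℕ ℂ))
        = if δ ≤ n then
            MvPowerSeries.coeff (n - δ) (OmegaElt G * (p : MvPowerSeries ℕ ℂ)) else 0
      rw [MvPolynomial.coe_mul, MvPolynomial.coe_X, ← mul_assoc,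
        MvPowerSeries.X_def, MvPowerSeries.coeff_mul_monomial]
      split
      · rw [mul_one]
      · rfl
    set Tgen : (ℕ →₀ ℕ) → (ℕ →₀ ℕ) → ℂ := fun d' e =>
      (OmegaElt G * (p : MvPowerSeries ℕ ℂ)) (d' + e) *
        ((d' + e).prod fun k m => (m.choose (e k) : ℂ) * F k ^ e k) with hTgen
    set A : (ℕ →₀ ℕ) → ℂ := fun e => if d k₀ = 0 then 0 else Tgen (d - δ) e with hA
    set B : (ℕ →₀ ℕ) → ℂ := fun e => if e k₀ = 0 then 0 else F k₀ * Tgen d (e - δ) with hB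
    have hpoint : ∀ e : ℕ →₀ ℕ,
        (OmegaElt G * ((p * X k₀ : SymFun) : MvPowerSeries ℕ ℂ)) (d + e) *
          ((d + e).prod fun k m => (m.choose (e k) : ℂ) * F k ^ e k) = A e + B e := by
      intro e
      rw [hXcoeff (d + e)]
      exact stepPointwise F (fun n => (OmegaElt G * (p : MvPowerSeries ℕ ℂ)) n) k₀ d e
    have hAsummable : Summable A := by
      by_cases hd : d k₀ = 0
      · simp only [hA, hd, if_true]
        exact summable_zero
      · simp only [hA, hd, if_false]
        exact hsum p (d - δ)
    have hinj : Function.Injective (fun e : ℕ →₀ ℕ => e + δ) := add_left_injective δ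
    have hBring : ∀ e : ℕ →₀ ℕ, B (e + δ) = F k₀ * Tgen d e := by
      intro e
      have h1 : (e + δ) k₀ ≠ 0 := by
        rw [Finsupp.add_apply, hδ, Finsupp.single_eq_same]
        omega
      rw [hB]
      simp only [if_neg h1, add_tsub_cancel_right]
    have hB0 : ∀ x ∉ Set.range (fun e : ℕ →₀ ℕ => e + δ), B x = 0 := by
      intro x hx
      by_cases hxk : x k₀ = 0
      · simp only [hB, hxk, if_true]
      · exfalso
        refine hx ⟨x - δ, ?_⟩
        ext j
        simp only [Finsupp.add_apply, Finsupp.tsub_apply, hδ, Finsupp.single_apply]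
        split
        · next h => subst h; omega
        · omega
    have hBsummable : Summable B := by
      rw [← Function.Injective.summable_iff hinj hB0]
      rw [show (B ∘ fun e : ℕ →₀ ℕ => e + δ) = fun e => F k₀ * Tgen d e from funext hBring]
      exact (hsum p d).mul_left (F k₀)
    have hΓ : GammaPlus F (p * X k₀)
        = GammaPlus F p * X k₀ + GammaPlus F p * C (F k₀) := by
      rw [map_mul]
      have : GammaPlus F (X k₀) = X k₀ + C (F k₀) := by
        rw [GammaPlus, aeval_X]
      rw [this]
      ring
    have hRHS : (OmegaElt G * ((GammaPlus F (p * X k₀) : SymFun) : MvPowerSeries ℕ ℂ)) d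
        = (if δ ≤ d then
            (OmegaElt G * ((GammaPlus F p : SymFun) : MvPowerSeries ℕ ℂ)) (d - δ) else 0)
          + F k₀ * (OmegaElt G * ((GammaPlus F p : SymFun) : MvPowerSeries ℕ ℂ)) d := by
      show MvPowerSeries.coeff d
          (OmegaElt G * ((GammaPlus F (p * X k₀) : SymFun) : MvPowerSeries ℕ ℂ))
        = (if δ ≤ d then
            MvPowerSeries.coeff (d - δ)
              (OmegaElt G * ((GammaPlus F p : SymFun) : MvPowerSeries ℕ ℂ)) else 0)
          + F k₀ * MvPowerSeries.coeff d
              (OmegaElt G * ((GammaPlus F p : SymFun) : MvPowerSeries ℕ ℂ))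
      rw [hΓ, MvPolynomial.coe_add, MvPolynomial.coe_mul, MvPolynomial.coe_mul,
        MvPolynomial.coe_X, MvPolynomial.coe_C, mul_add, map_add, ← mul_assoc, ← mul_assoc,
        MvPowerSeries.X_def, MvPowerSeries.coeff_mul_monomial, MvPowerSeries.coeff_mul_C]
      split
      · rw [mul_one]
        ring
      · ring
    show (∑' e : ℕ →₀ ℕ,
        (OmegaElt G * ((p * X k₀ : SymFun) : MvPowerSeries ℕ ℂ)) (d + e) *
          ((d + e).prod fun k m => (m.choose (e k) : ℂ) * F k ^ e k)) = _
    rw [tsum_congr hpoint, Summable.tsum_add hAsummable hBsummable]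
    have hApart : ∑' e, A e = if δ ≤ d then
        E * (OmegaElt G * ((GammaPlus F p : SymFun) : MvPowerSeries ℕ ℂ)) (d - δ) else 0 := by
      by_cases hd : d k₀ = 0
      · have hnle : ¬ δ ≤ d := by
          rw [hδ, Finsupp.single_le_iff]
          omega
        rw [if_neg hnle]
        simp only [hA, hd, if_true]
        exact tsum_zero
      · have hle : δ ≤ d := by
          rw [hδ, Finsupp.single_le_iff]
          omega
        rw [if_pos hle]
        simp only [hA, hd, if_false]
        exact hp (d - δ)
    have hBpart : ∑' e, B e
        = F k₀ * (E * (OmegaElt G * ((GammaPlus F p : SymFun) : MvPowerSeries ℕ ℂ)) d) := by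
      have hsupp : Function.support B ⊆ Set.range (fun e : ℕ →₀ ℕ => e + δ) := by
        intro x hx
        by_contra hxr
        exact hx (hB0 x hxr)
      rw [← Function.Injective.tsum_eq hinj hsupp, tsum_congr hBring, tsum_mul_left]
      have h1 := hp d
      rw [show GammaPlusExt F (OmegaElt G * (p : MvPowerSeries ℕ ℂ)) d
        = ∑' e : ℕ →₀ ℕ, (OmegaElt G * (p : MvPowerSeries ℕ ℂ)) (d + e) *
          ((d + e).prod fun k m => (m.choose (e k) : ℂ) * F k ^ e k) from rfl] at h1
      rw [h1]
    rw [hApart, hBpart, hRHS]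
    by_cases hled : δ ≤ d
    · rw [if_pos hled, if_pos hled]
      ring
    · rw [if_neg hled, if_neg hled]
      ring

/-!
STATEMENT 4: Γ_±(f) and Γ_±(g) commute, and
Γ_+(f)·Γ_-(g) = Ω(fg)·Γ_-(g)·Γ_+(f), where Γ_-(g) is multiplication by
Ω(p_1 g) and Ω(fg) = exp(∑_{k≥1} f_k g_k / k) acts as a scalar.
-/
theorem Gamma_commutation_relations (F G : ℕ → ℂ)
    (hΩ : Summable fun k : ℕ => F k * G k / (k + 1))
    (hsum : ∀ (u : SymFun) (d : ℕ →₀ ℕ),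
      Summable fun e : ℕ →₀ ℕ =>
        (OmegaElt G * (u : MvPowerSeries ℕ ℂ)) (d + e) *
          ((d + e).prod fun k m => (m.choose (e k) : ℂ) * F k ^ e k)) :
    (∀ u : SymFun, GammaPlus F (GammaPlus G u) = GammaPlus G (GammaPlus F u)) ∧
    (∀ S : MvPowerSeries ℕ ℂ,
      OmegaElt F * (OmegaElt G * S) = OmegaElt G * (OmegaElt F * S)) ∧
    (∀ u : SymFun,
      GammaPlusExt F (OmegaElt G * (u : MvPowerSeries ℕ ℂ)) =
        Complex.exp (∑' k : ℕ, F k * G k / (k + 1)) •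
          (OmegaElt G * ((GammaPlus F u : SymFun) : MvPowerSeries ℕ ℂ))) := by
  refine ⟨?_, ?_, ?_⟩
  · intro u
    have h : (GammaPlus F).comp (GammaPlus G) = (GammaPlus G).comp (GammaPlus F) := by
      apply MvPolynomial.algHom_ext
      intro k
      simp only [AlgHom.comp_apply, GammaPlus, aeval_X, map_add, aeval_C,
        MvPolynomial.algebraMap_eq]
      ring
    have := DFunLike.congr_fun h u
    simpa [AlgHom.comp_apply] using this
  · intro S
    rw [mul_left_comm]
  · intro u
    funext d
    have h := mainInduction F G hΩ hsum u d
    exact h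
end

section
/- For partitions μ, ν, the Laurent polynomial E_{μ,ν} := V_∅·\bar{V}_∅·\bar{M} − V_ν·\bar{V}_μ·\bar{M}, where V_μ = M^{−1} − U_μ, M = (1−z_1)(1−z_2), U_μ = ∑_{(i,j)∈μ} z_1^j z_2^i, and \bar{f}(z_1,z_2) = f(z_1^{−1},z_2^{−1}), equals ∑_{□∈μ} z_1^{−a_μ(□)−1} z_2^{l_ν(□)} + ∑_{□∈ν} z_1^{a_ν(□)} z_2^{−l_μ(□)−1}, where for a box □ = (i,j), a_μ(□) = μ_i − j is the arm length and l_μ(□) = μ'_j − i is the leg length. -/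
/-- The conjugate partition: μ'_{j+1} = #{i < n : j < μ i}, for a partition
given by μ : ℕ → ℕ (0-based rows) supported in [0, n). -/
def conjPart (n : ℕ) (μ : ℕ → ℕ) (j : ℕ) : ℕ :=
  ((Finset.range n).filter fun i => j < μ i).card

/-- Arm length of the (0-based) box (i,j) with respect to μ (as an integer,
possibly negative): a_μ(i,j) = μ_i − j − 1 in 0-based coordinates. -/
def armZ (μ : ℕ → ℕ) (i j : ℕ) : ℤ := (μ i : ℤ) - j - 1

/-- Leg length of the (0-based) box (i,j) with respect to μ:
l_μ(i,j) = μ'_j − i − 1 in 0-based coordinates. -/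
def legZ (n : ℕ) (μ : ℕ → ℕ) (i j : ℕ) : ℤ := (conjPart n μ j : ℤ) - i - 1

open Finset

section AuxLemmas

variable {K : Type*} [Field K]

lemma al_zsn (z : K) (hz : z ≠ 0) (p q : ℕ) :
    z ^ ((p : ℤ) - q) = z ^ p * z⁻¹ ^ q := by
  rw [sub_eq_add_neg, zpow_add₀ hz, zpow_natCast, zpow_neg, zpow_natCast, inv_pow]

lemma al_zsn' (z : K) (hz : z ≠ 0) (p q : ℕ) (m : ℤ)
    (hm : m = (p : ℤ) - q) : z ^ m = z ^ p * z⁻¹ ^ q := by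
  rw [hm, al_zsn z hz p q]

lemma al_zrefl (z : K) (a : ℕ) (f g : ℕ → ℤ)
    (h : ∀ j < a, g j = f (a - 1 - j)) :
    ∑ j ∈ range a, z ^ f j = ∑ j ∈ range a, z ^ g j := by
  rw [← Finset.sum_range_reflect (fun j => z ^ f j) a]
  exact Finset.sum_congr rfl fun j hj => by rw [h j (mem_range.mp hj)]

lemma al_geom (w : K) (c : ℕ) :
    w ^ c = 1 - (1 - w) * ∑ k ∈ range c, w ^ k := by
  linear_combination -geom_sum_mul w c

lemma al_filter_min (a b : ℕ) :
    (range a).filter (fun j => j < b) = range (min a b) := by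
  ext j; simp only [mem_filter, mem_range]; omega

lemma al_conj_filter (n : ℕ) (ν : ℕ → ℕ) (hν : Antitone ν) (j : ℕ) :
    (range n).filter (fun k => j < ν k) = range (conjPart n ν j) := by
  ext k
  simp only [mem_filter, mem_range, conjPart]
  constructor
  · rintro ⟨hk, hj⟩
    have hsub : range (k + 1) ⊆ (range n).filter (fun i => j < ν i) := by
      intro m hm
      rw [mem_range] at hm
      rw [mem_filter, mem_range]
      exact ⟨lt_of_le_of_lt (Nat.le_of_lt_succ hm) hk,
        lt_of_lt_of_le hj (hν (Nat.le_of_lt_succ hm))⟩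
    have := Finset.card_le_card hsub
    simpa using this
  · intro hk
    have hsub : (range n).filter (fun i => j < ν i) ⊆ range n := filter_subset _ _
    have hkn : k < n := lt_of_lt_of_le hk (by simpa using Finset.card_le_card hsub)
    refine ⟨hkn, ?_⟩
    by_contra hj
    push_neg at hj
    have hsub2 : (range n).filter (fun i => j < ν i) ⊆ range k := by
      intro m hm
      simp only [mem_filter, mem_range] at hm
      rw [mem_range]
      by_contra hmk
      push_neg at hmk
      exact absurd hm.2 (not_lt.mpr (le_trans (hν hmk) hj))
    have := Finset.card_le_card hsub2
    simp only [card_range] at this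
    omega

/-- reflection: ∑_{j<a} z⁻¹^(j+1) = ∑_{j<a} z^j z⁻¹^a -/
lemma al_refl1 (z : K) (hz : z ≠ 0) (a : ℕ) :
    ∑ j ∈ range a, z⁻¹ ^ (j + 1) = ∑ j ∈ range a, z ^ j * z⁻¹ ^ a := by
  have h1 : ∑ j ∈ range a, z⁻¹ ^ (j + 1) = ∑ j ∈ range a, z ^ ((0 : ℤ) - ((j : ℤ) + 1)) := by
    refine Finset.sum_congr rfl fun j _ => ?_
    rw [al_zsn' z hz 0 (j + 1) _ (by push_cast; ring), pow_zero, one_mul]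
  have h2 : ∑ j ∈ range a, z ^ j * z⁻¹ ^ a = ∑ j ∈ range a, z ^ ((j : ℤ) - (a : ℤ)) := by
    refine Finset.sum_congr rfl fun j _ => ?_
    rw [al_zsn' z hz j a _ (by push_cast; ring)]
  rw [h1, h2]
  refine (al_zrefl z a (fun j => (j : ℤ) - (a : ℤ)) (fun j => (0 : ℤ) - ((j : ℤ) + 1)) ?_).symm
  intro j hj
  push_cast
  omega

/-- reflection: ∑_{j<b} z^b z⁻¹^(j+1) = ∑_{j<b} z^j -/
lemma al_refl2 (z : K) (hz : z ≠ 0) (b : ℕ) :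
    ∑ j ∈ range b, z ^ b * z⁻¹ ^ (j + 1) = ∑ j ∈ range b, z ^ j := by
  have h1 : ∑ j ∈ range b, z ^ b * z⁻¹ ^ (j + 1)
      = ∑ j ∈ range b, z ^ ((b : ℤ) - ((j : ℤ) + 1)) := by
    refine Finset.sum_congr rfl fun j _ => ?_
    rw [al_zsn' z hz b (j + 1) _ (by push_cast; ring)]
  have h2 : ∑ j ∈ range b, z ^ j = ∑ j ∈ range b, z ^ ((j : ℤ) + 0) := by
    refine Finset.sum_congr rfl fun j _ => ?_
    rw [al_zsn' z hz j 0 _ (by push_cast; ring), pow_zero, mul_one]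
  rw [h1, h2]
  refine (al_zrefl z b (fun j => (j : ℤ) + 0) (fun j => (b : ℤ) - ((j : ℤ) + 1)) ?_).symm
  intro j hj
  push_cast
  omega

/-- The key one-variable identity. -/
lemma al_key (z : K) (hz : z ≠ 0) (a b : ℕ) :
    z⁻¹ * (1 - z) * (∑ j ∈ range b, z ^ j) * (∑ j ∈ range a, z⁻¹ ^ j)
      = (∑ j ∈ range (min a b), z ^ j * z⁻¹ ^ a)
        - ∑ j ∈ range (min a b), z ^ b * z⁻¹ ^ (j + 1) := by
  have hg : (1 - z) * ∑ j ∈ range b, z ^ j = 1 - z ^ b := by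
    linear_combination -geom_sum_mul z b
  have step1 : z⁻¹ * (1 - z) * (∑ j ∈ range b, z ^ j) * (∑ j ∈ range a, z⁻¹ ^ j)
      = (∑ j ∈ range a, z⁻¹ ^ (j + 1)) - ∑ j ∈ range a, z ^ b * z⁻¹ ^ (j + 1) := by
    calc z⁻¹ * (1 - z) * (∑ j ∈ range b, z ^ j) * (∑ j ∈ range a, z⁻¹ ^ j)
        = z⁻¹ * (1 - z ^ b) * ∑ j ∈ range a, z⁻¹ ^ j := by rw [← hg]; ring
      _ = ∑ j ∈ range a, (z⁻¹ ^ (j + 1) - z ^ b * z⁻¹ ^ (j + 1)) := by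
          rw [Finset.mul_sum]
          exact Finset.sum_congr rfl fun j _ => by ring
      _ = _ := by rw [Finset.sum_sub_distrib]
  rw [step1, al_refl1 z hz a]
  rcases le_total a b with hab | hba
  · rw [min_eq_left hab]
  · rw [min_eq_right hba]
    have hsplit : ∀ f : ℕ → K,
        ∑ j ∈ range a, f j = ∑ j ∈ range b, f j + ∑ j ∈ Ico b a, f j := by
      intro f
      rw [range_eq_Ico, ← Finset.sum_Ico_consecutive f (Nat.zero_le b) hba, range_eq_Ico]
    have htail : ∑ j ∈ Ico b a, z ^ j * z⁻¹ ^ a = ∑ j ∈ Ico b a, z ^ b * z⁻¹ ^ (j + 1) := by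
      rw [Finset.sum_Ico_eq_sum_range, Finset.sum_Ico_eq_sum_range]
      have e1 : ∑ j ∈ range (a - b), z ^ (b + j) * z⁻¹ ^ a
          = ∑ j ∈ range (a - b), z ^ ((b : ℤ) + (j : ℤ) - (a : ℤ)) := by
        refine Finset.sum_congr rfl fun j _ => ?_
        rw [al_zsn' z hz (b + j) a _ (by push_cast; ring)]
      have e2 : ∑ j ∈ range (a - b), z ^ b * z⁻¹ ^ (b + j + 1)
          = ∑ j ∈ range (a - b), z ^ ((b : ℤ) - ((b : ℤ) + (j : ℤ) + 1)) := by
        refine Finset.sum_congr rfl fun j _ => ?_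
        rw [al_zsn' z hz b (b + j + 1) _ (by push_cast; ring)]
      rw [e1, e2]
      refine al_zrefl z (a - b) (fun j => (b : ℤ) + (j : ℤ) - (a : ℤ))
        (fun j => (b : ℤ) - ((b : ℤ) + (j : ℤ) + 1)) ?_
      intro j hj
      push_cast
      omega
    rw [hsplit (fun j => z ^ j * z⁻¹ ^ a), hsplit (fun j => z ^ b * z⁻¹ ^ (j + 1))]
    rw [htail]
    ring

lemma al_stepA (z1 z2 B C : K)
    (hz1 : z1 ≠ 0) (hz2 : z2 ≠ 0) (h1 : 1 - z1 ≠ 0) (h2 : 1 - z2 ≠ 0) :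
    ((1 - z1⁻¹) * (1 - z2⁻¹)) *
        (((1 - z1) * (1 - z2))⁻¹ * ((1 - z1⁻¹) * (1 - z2⁻¹))⁻¹ -
          (((1 - z1) * (1 - z2))⁻¹ - B) * (((1 - z1⁻¹) * (1 - z2⁻¹))⁻¹ - C)) =
      z1⁻¹ * z2⁻¹ * C + B - z1⁻¹ * z2⁻¹ * ((1 - z1) * (1 - z2)) * (B * C) := by
  have h1' : (1 : K) - z1⁻¹ ≠ 0 := by
    rw [sub_ne_zero] at h1 ⊢
    intro h
    exact h1 (by rw [← inv_inv z1, ← h, inv_one])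
  have h2' : (1 : K) - z2⁻¹ ≠ 0 := by
    rw [sub_ne_zero] at h2 ⊢
    intro h
    exact h2 (by rw [← inv_inv z2, ← h, inv_one])
  have hM : (1 - z1) * (1 - z2) ≠ 0 := mul_ne_zero h1 h2
  have hN : (1 - z1⁻¹) * (1 - z2⁻¹) ≠ 0 := mul_ne_zero h1' h2'
  have hMi : ((1 - z1) * (1 - z2)) * ((1 - z1) * (1 - z2))⁻¹ = 1 := mul_inv_cancel₀ hM
  have hNi : ((1 - z1⁻¹) * (1 - z2⁻¹)) * ((1 - z1⁻¹) * (1 - z2⁻¹))⁻¹ = 1 := mul_inv_cancel₀ hN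
  have hNM : (1 - z1⁻¹) * (1 - z2⁻¹) = z1⁻¹ * z2⁻¹ * ((1 - z1) * (1 - z2)) := by
    field_simp
    ring
  linear_combination (C * ((1 - z1) * (1 - z2))⁻¹ - B * C) * hNM +
    C * z1⁻¹ * z2⁻¹ * hMi + B * hNi

end AuxLemmas

/-!
STATEMENT 8 (arm–leg formula): with M = (1−z₁)(1−z₂), U_μ = ∑_{□∈μ} z₁^j z₂^i,
V_μ = M⁻¹ − U_μ and conjugation z ↦ z⁻¹,
E_{μ,ν} = M̄ (V_∅ V̄_∅ − V_ν V̄_μ)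
        = ∑_{□∈μ} z₁^{−a_μ(□)−1} z₂^{l_ν(□)} + ∑_{□∈ν} z₁^{a_ν(□)} z₂^{−l_μ(□)−1}.
Stated in an arbitrary field with z₁, z₂ ≠ 0 and 1−z₁, 1−z₂ ≠ 0.
-/
theorem arm_leg_formula {K : Type*} [Field K] (z1 z2 : K)
    (hz1 : z1 ≠ 0) (hz2 : z2 ≠ 0) (h1 : 1 - z1 ≠ 0) (h2 : 1 - z2 ≠ 0)
    (μ ν : ℕ → ℕ) (hμ : Antitone μ) (hν : Antitone ν) (n : ℕ)
    (hμn : ∀ i, n ≤ i → μ i = 0) (hνn : ∀ i, n ≤ i → ν i = 0) :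
    ((1 - z1⁻¹) * (1 - z2⁻¹)) *
        (((1 - z1) * (1 - z2))⁻¹ * ((1 - z1⁻¹) * (1 - z2⁻¹))⁻¹ -
          (((1 - z1) * (1 - z2))⁻¹ -
              ∑ i ∈ Finset.range n, ∑ j ∈ Finset.range (ν i), z1 ^ j * z2 ^ i) *
            (((1 - z1⁻¹) * (1 - z2⁻¹))⁻¹ -
              ∑ i ∈ Finset.range n, ∑ j ∈ Finset.range (μ i), z1⁻¹ ^ j * z2⁻¹ ^ i)) =
      (∑ i ∈ Finset.range n, ∑ j ∈ Finset.range (μ i),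
          z1 ^ (-(armZ μ i j) - 1) * z2 ^ (legZ n ν i j)) +
        ∑ i ∈ Finset.range n, ∑ j ∈ Finset.range (ν i),
          z1 ^ (armZ ν i j) * z2 ^ (-(legZ n μ i j) - 1) := by
  set B : K := ∑ i ∈ Finset.range n, ∑ j ∈ Finset.range (ν i), z1 ^ j * z2 ^ i with hB
  set C : K := ∑ i ∈ Finset.range n, ∑ j ∈ Finset.range (μ i), z1⁻¹ ^ j * z2⁻¹ ^ i with hC
  set T : K := ∑ i ∈ Finset.range n, ∑ k ∈ Finset.range n,
    (∑ j ∈ Finset.range (min (μ i) (ν k)), z1 ^ j * z1⁻¹ ^ (μ i)) *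
      (z2 ^ k * z2⁻¹ ^ (i + 1)) with hT
  set T2 : K := ∑ i ∈ Finset.range n, ∑ k ∈ Finset.range n,
    (∑ j ∈ Finset.range (min (μ i) (ν k)), z1 ^ (ν k) * z1⁻¹ ^ (j + 1)) *
      (z2 ^ k * z2⁻¹ ^ i) with hT2
  -- geometric expansion of conjugate-partition powers
  have hGν : ∀ j : ℕ, (z2 : K) ^ (conjPart n ν j)
      = 1 - (1 - z2) * ∑ k ∈ range n, (if j < ν k then z2 ^ k else 0) := by
    intro j
    have hf : ∑ k ∈ range n, (if j < ν k then z2 ^ k else (0 : K))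
        = ∑ k ∈ range (conjPart n ν j), z2 ^ k := by
      rw [← Finset.sum_filter, al_conj_filter n ν hν j]
    rw [hf]
    exact al_geom z2 _
  have hGμ : ∀ j : ℕ, (z2⁻¹ : K) ^ (conjPart n μ j)
      = 1 - (1 - z2⁻¹) * ∑ k ∈ range n, (if j < μ k then z2⁻¹ ^ k else 0) := by
    intro j
    have hf : ∑ k ∈ range n, (if j < μ k then z2⁻¹ ^ k else (0 : K))
        = ∑ k ∈ range (conjPart n μ j), z2⁻¹ ^ k := by
      rw [← Finset.sum_filter, al_conj_filter n μ hμ j]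
    rw [hf]
    exact al_geom z2⁻¹ _
  -- first RHS sum
  have hR1 : (∑ i ∈ Finset.range n, ∑ j ∈ Finset.range (μ i),
      z1 ^ (-(armZ μ i j) - 1) * z2 ^ (legZ n ν i j)) = z1⁻¹ * z2⁻¹ * C - (1 - z2) * T := by
    calc ∑ i ∈ Finset.range n, ∑ j ∈ Finset.range (μ i),
          z1 ^ (-(armZ μ i j) - 1) * z2 ^ (legZ n ν i j)
        = ∑ i ∈ range n, ∑ j ∈ range (μ i),
            z1 ^ j * z1⁻¹ ^ (μ i) *
              ((1 - (1 - z2) * ∑ k ∈ range n, (if j < ν k then z2 ^ k else 0)) *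
                z2⁻¹ ^ (i + 1)) := by
          refine Finset.sum_congr rfl fun i _ => Finset.sum_congr rfl fun j _ => ?_
          rw [al_zsn' z1 hz1 j (μ i) _ (by simp only [armZ]; push_cast; ring),
            al_zsn' z2 hz2 (conjPart n ν j) (i + 1) _
              (by simp only [legZ]; push_cast; ring),
            hGν j]
      _ = (∑ i ∈ range n, ∑ j ∈ range (μ i), z1 ^ j * z1⁻¹ ^ (μ i) * z2⁻¹ ^ (i + 1))
          - (1 - z2) * ∑ i ∈ range n, ∑ j ∈ range (μ i), ∑ k ∈ range n,
              (if j < ν k then z1 ^ j * z1⁻¹ ^ (μ i) * (z2 ^ k * z2⁻¹ ^ (i + 1)) else 0) := by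
          rw [Finset.mul_sum, ← Finset.sum_sub_distrib]
          refine Finset.sum_congr rfl fun i _ => ?_
          rw [Finset.mul_sum, ← Finset.sum_sub_distrib]
          refine Finset.sum_congr rfl fun j _ => ?_
          have h : ∑ k ∈ range n,
              (if j < ν k then z1 ^ j * z1⁻¹ ^ (μ i) * (z2 ^ k * z2⁻¹ ^ (i + 1)) else (0 : K))
              = z1 ^ j * z1⁻¹ ^ (μ i) * z2⁻¹ ^ (i + 1) *
                  ∑ k ∈ range n, (if j < ν k then z2 ^ k else 0) := by
            rw [Finset.mul_sum]
            refine Finset.sum_congr rfl fun k _ => ?_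
            split_ifs <;> ring
          linear_combination (1 - z2) * h
      _ = z1⁻¹ * z2⁻¹ * C - (1 - z2) * T := by
          congr 1
          · calc ∑ i ∈ range n, ∑ j ∈ range (μ i), z1 ^ j * z1⁻¹ ^ (μ i) * z2⁻¹ ^ (i + 1)
                = ∑ i ∈ range n, ∑ j ∈ range (μ i), z1⁻¹ * z2⁻¹ * (z1⁻¹ ^ j * z2⁻¹ ^ i) := by
                  refine Finset.sum_congr rfl fun i _ => ?_
                  calc ∑ j ∈ range (μ i), z1 ^ j * z1⁻¹ ^ (μ i) * z2⁻¹ ^ (i + 1)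
                      = (∑ j ∈ range (μ i), z1 ^ j * z1⁻¹ ^ (μ i)) * z2⁻¹ ^ (i + 1) := by
                        rw [Finset.sum_mul]
                    _ = (∑ j ∈ range (μ i), z1⁻¹ ^ (j + 1)) * z2⁻¹ ^ (i + 1) := by
                        rw [al_refl1 z1 hz1 (μ i)]
                    _ = ∑ j ∈ range (μ i), z1⁻¹ * z2⁻¹ * (z1⁻¹ ^ j * z2⁻¹ ^ i) := by
                        rw [Finset.sum_mul]
                        exact Finset.sum_congr rfl fun j _ => by ring
              _ = z1⁻¹ * z2⁻¹ * C := by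
                  rw [hC]
                  simp only [Finset.mul_sum]
          · congr 1
            rw [hT]
            refine Finset.sum_congr rfl fun i _ => ?_
            rw [Finset.sum_comm]
            refine Finset.sum_congr rfl fun k _ => ?_
            rw [← Finset.sum_filter, al_filter_min (μ i) (ν k), Finset.sum_mul]
  -- second RHS sum
  have hR2 : (∑ i ∈ Finset.range n, ∑ j ∈ Finset.range (ν i),
      z1 ^ (armZ ν i j) * z2 ^ (-(legZ n μ i j) - 1)) = B - (1 - z2⁻¹) * T2 := by
    calc ∑ i ∈ Finset.range n, ∑ j ∈ Finset.range (ν i),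
          z1 ^ (armZ ν i j) * z2 ^ (-(legZ n μ i j) - 1)
        = ∑ i ∈ range n, ∑ j ∈ range (ν i),
            z1 ^ (ν i) * z1⁻¹ ^ (j + 1) *
              (z2 ^ i * (1 - (1 - z2⁻¹) *
                ∑ k ∈ range n, (if j < μ k then z2⁻¹ ^ k else 0))) := by
          refine Finset.sum_congr rfl fun i _ => Finset.sum_congr rfl fun j _ => ?_
          rw [al_zsn' z1 hz1 (ν i) (j + 1) _ (by simp only [armZ]; push_cast; ring),
            al_zsn' z2 hz2 i (conjPart n μ j) _ (by simp only [legZ]; push_cast; ring),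
            hGμ j]
      _ = (∑ i ∈ range n, ∑ j ∈ range (ν i), z1 ^ (ν i) * z1⁻¹ ^ (j + 1) * z2 ^ i)
          - (1 - z2⁻¹) * ∑ i ∈ range n, ∑ j ∈ range (ν i), ∑ k ∈ range n,
              (if j < μ k then z1 ^ (ν i) * z1⁻¹ ^ (j + 1) * (z2 ^ i * z2⁻¹ ^ k) else 0) := by
          rw [Finset.mul_sum, ← Finset.sum_sub_distrib]
          refine Finset.sum_congr rfl fun i _ => ?_
          rw [Finset.mul_sum, ← Finset.sum_sub_distrib]
          refine Finset.sum_congr rfl fun j _ => ?_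
          have h : ∑ k ∈ range n,
              (if j < μ k then z1 ^ (ν i) * z1⁻¹ ^ (j + 1) * (z2 ^ i * z2⁻¹ ^ k) else (0 : K))
              = z1 ^ (ν i) * z1⁻¹ ^ (j + 1) * z2 ^ i *
                  ∑ k ∈ range n, (if j < μ k then z2⁻¹ ^ k else 0) := by
            rw [Finset.mul_sum]
            refine Finset.sum_congr rfl fun k _ => ?_
            split_ifs <;> ring
          linear_combination (1 - z2⁻¹) * h
      _ = B - (1 - z2⁻¹) * T2 := by
          congr 1
          · rw [hB]
            refine Finset.sum_congr rfl fun i _ => ?_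
            calc ∑ j ∈ range (ν i), z1 ^ (ν i) * z1⁻¹ ^ (j + 1) * z2 ^ i
                = (∑ j ∈ range (ν i), z1 ^ (ν i) * z1⁻¹ ^ (j + 1)) * z2 ^ i := by
                  rw [Finset.sum_mul]
              _ = (∑ j ∈ range (ν i), z1 ^ j) * z2 ^ i := by rw [al_refl2 z1 hz1 (ν i)]
              _ = ∑ j ∈ range (ν i), z1 ^ j * z2 ^ i := by rw [Finset.sum_mul]
          · congr 1
            calc ∑ i ∈ range n, ∑ j ∈ range (ν i), ∑ k ∈ range n,
                  (if j < μ k then z1 ^ (ν i) * z1⁻¹ ^ (j + 1) * (z2 ^ i * z2⁻¹ ^ k) else (0 : K))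
                = ∑ i ∈ range n, ∑ k ∈ range n,
                    (∑ j ∈ range (min (ν i) (μ k)), z1 ^ (ν i) * z1⁻¹ ^ (j + 1)) *
                      (z2 ^ i * z2⁻¹ ^ k) := by
                  refine Finset.sum_congr rfl fun i _ => ?_
                  rw [Finset.sum_comm]
                  refine Finset.sum_congr rfl fun k _ => ?_
                  rw [← Finset.sum_filter, al_filter_min (ν i) (μ k), Finset.sum_mul]
              _ = T2 := by
                  rw [hT2]
                  conv_lhs => rw [Finset.sum_comm]
                  refine Finset.sum_congr rfl fun i _ => Finset.sum_congr rfl fun k _ => ?_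
                  rw [min_comm (ν k) (μ i)]
  -- the product term
  have hBC : z1⁻¹ * z2⁻¹ * ((1 - z1) * (1 - z2)) * (B * C)
      = (1 - z2) * T + (1 - z2⁻¹) * T2 := by
    rw [mul_comm B C, hB, hC, hT, hT2]
    calc z1⁻¹ * z2⁻¹ * ((1 - z1) * (1 - z2)) *
          ((∑ i ∈ Finset.range n, ∑ j ∈ Finset.range (μ i), z1⁻¹ ^ j * z2⁻¹ ^ i) *
            (∑ i ∈ Finset.range n, ∑ j ∈ Finset.range (ν i), z1 ^ j * z2 ^ i))
        = ∑ i ∈ range n, ∑ k ∈ range n, z1⁻¹ * z2⁻¹ * ((1 - z1) * (1 - z2)) *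
            ((∑ j ∈ range (μ i), z1⁻¹ ^ j * z2⁻¹ ^ i) *
              (∑ j ∈ range (ν k), z1 ^ j * z2 ^ k)) := by
          rw [Finset.sum_mul_sum]
          simp only [Finset.mul_sum]
      _ = ∑ i ∈ range n, ∑ k ∈ range n,
            ((1 - z2) * ((∑ j ∈ range (min (μ i) (ν k)), z1 ^ j * z1⁻¹ ^ (μ i)) *
                (z2 ^ k * z2⁻¹ ^ (i + 1)))
              + (1 - z2⁻¹) * ((∑ j ∈ range (min (μ i) (ν k)), z1 ^ (ν k) * z1⁻¹ ^ (j + 1)) *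
                (z2 ^ k * z2⁻¹ ^ i))) := by
          refine Finset.sum_congr rfl fun i _ => Finset.sum_congr rfl fun k _ => ?_
          conv_lhs => rw [← Finset.sum_mul, ← Finset.sum_mul]
          linear_combination ((1 - z2) * z2⁻¹ * z2 ^ k * z2⁻¹ ^ i) * al_key z1 hz1 (μ i) (ν k) +
            ((∑ j ∈ Finset.range (min (μ i) (ν k)), z1 ^ (ν k) * z1⁻¹ ^ (j + 1)) *
              z2 ^ k * z2⁻¹ ^ i) * mul_inv_cancel₀ hz2
      _ = _ := by
          simp only [Finset.sum_add_distrib, ← Finset.mul_sum]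
  rw [al_stepA z1 z2 B C hz1 hz2 h1 h2, hR1, hR2]
  linear_combination -hBC
end
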